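/- Consider partial functions with the pointwise refinement order, and let E := {f | PFun.ran f = Set.univ} (surjective partial functions) and M := {f | f is injective on its domain}. Then (E, M) is an oplax weak factorisation system: (i) every f ∈ E is oplaxly weakly orthogonal to every g ∈ M; (ii) every f : α →. β factors as f = m.comp e with e ∈ E and m ∈ M (take e : α →. {b : β // b ∈ PFun.ran f} the corestriction of f to its range and m the total inclusion of the range into β); (iii) f ∈ E if and only if f is oplaxly weakly orthogonal to every member of M, and g ∈ M if and only if every member of E is oplaxly weakly orthogonal to g. -/

import Mathlib

universe u

/-- `f ≤ g` pointwise: every value of `f a` is a value of `g a`. -/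
def PFunLE {α β : Type u} (f g : α →. β) : Prop := ∀ a, f a ≤ g a

/-- `f` is total: defined everywhere. -/
def PFun.Total {α β : Type u} (f : α →. β) : Prop := ∀ a, (f a).Dom

/-- `f` is injective on its domain. -/
def PFun.InjOnDom {α β : Type u} (f : α →. β) : Prop :=
  ∀ ⦃a a' : α⦄ ⦃b : β⦄, b ∈ f a → b ∈ f a' → a = a'

/-- `f` is oplaxly weakly orthogonal to `g`: every oplax square `(u, v) : f → g`
(`v.comp f ≤ g.comp u`) admits an oplax diagonal. -/
def PFun.OplaxOrthP {α β γ δ : Type u} (f : α →. β) (g : γ →. δ) : Prop :=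
  ∀ (u : α →. γ) (v : β →. δ), PFunLE (v.comp f) (g.comp u) →
    ∃ d : β →. γ, PFunLE (d.comp f) u ∧ PFunLE v (g.comp d)

private theorem lift_aux {α β γ δ : Type u} (f : α →. β) (g : γ →. δ)
    (hf : PFun.ran f = Set.univ) (hg : PFun.InjOnDom g) : PFun.OplaxOrthP f g := by
  intro u v sq
  classical
  refine ⟨fun b => ⟨∃ c w, w ∈ v b ∧ w ∈ g c, fun h => h.choose⟩, ?_, ?_⟩
  · intro a c hc
    replace hc := Part.mem_bind_iff.mp hc
    obtain ⟨b, hbf, hcd⟩ := hc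
    rw [Part.mem_mk_iff] at hcd
    obtain ⟨h, rfl⟩ := hcd
    obtain ⟨w, hwv, hwg⟩ := h.choose_spec
    have hwa : w ∈ (v.comp f) a := by
      exact Part.mem_bind_iff.mpr ⟨b, hbf, hwv⟩
    have := sq a w hwa
    replace this := Part.mem_bind_iff.mp this
    obtain ⟨c', hc'u, hwg'⟩ := this
    rwa [hg hwg hwg']
  · intro b w hw
    have hb : b ∈ f.ran := by rw [hf]; trivial
    obtain ⟨a, hba⟩ := hb
    have hwa : w ∈ (v.comp f) a := by
      exact Part.mem_bind_iff.mpr ⟨b, hba, hw⟩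
    have := sq a w hwa
    replace this := Part.mem_bind_iff.mp this
    obtain ⟨c, hcu, hwg⟩ := this
    have hdom : ∃ c w', w' ∈ v b ∧ w' ∈ g c := ⟨c, w, hw, hwg⟩
    refine Part.mem_bind_iff.mpr ⟨hdom.choose, ?_, ?_⟩
    · rw [Part.mem_mk_iff]; exact ⟨hdom, rfl⟩
    · obtain ⟨w', hw'v, hw'g⟩ := hdom.choose_spec
      rwa [Part.mem_unique hw hw'v]

/-- `(surjective, injective-on-domain)` is an oplax weak factorisation system on
partial functions. -/
theorem stmt17 :
    (∀ {α β γ δ : Type u} (f : α →. β) (g : γ →. δ),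
      PFun.ran f = Set.univ → PFun.InjOnDom g → PFun.OplaxOrthP f g) ∧
    (∀ {α β : Type u} (f : α →. β), ∃ (κ : Type u) (e : α →. κ) (m : κ →. β),
      f = m.comp e ∧ PFun.ran e = Set.univ ∧ PFun.InjOnDom m ∧ PFun.Total m) ∧
    (∀ {α β : Type u} (f : α →. β),
      PFun.ran f = Set.univ ↔
        ∀ {γ δ : Type u} (g : γ →. δ), PFun.InjOnDom g → PFun.OplaxOrthP f g) ∧
    (∀ {γ δ : Type u} (g : γ →. δ),
      PFun.InjOnDom g ↔
        ∀ {α β : Type u} (f : α →. β), PFun.ran f = Set.univ → PFun.OplaxOrthP f g) := by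
  refine ⟨fun f g hf hg => lift_aux f g hf hg, ?_, ?_, ?_⟩
  · -- factorisation
    intro α β f
    refine ⟨{b : β // b ∈ f.ran},
      fun a => ⟨(f a).Dom, fun h => ⟨(f a).get h, ⟨a, Part.get_mem h⟩⟩⟩,
      fun k => Part.some k.1, ?_, ?_, ?_, ?_⟩
    · funext a
      apply Part.ext
      intro b
      show _ ↔ b ∈ Part.bind _ _
      simp only [Part.mem_bind_iff, Part.mem_mk_iff, Part.mem_some_iff]
      constructor
      · intro hb
        obtain ⟨hdom, hget⟩ := hb
        exact ⟨⟨b, ⟨a, ⟨hdom, hget⟩⟩⟩, ⟨hdom, Subtype.ext hget⟩, rfl⟩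
      · rintro ⟨k, ⟨h, rfl⟩, rfl⟩
        exact Part.get_mem h
    · apply Set.eq_univ_of_forall
      rintro ⟨b, a, hb⟩
      obtain ⟨hdom, hget⟩ := hb
      exact ⟨a, ⟨hdom, Subtype.ext hget⟩⟩
    · rintro k k' b hk hk'
      rw [Part.mem_some_iff] at hk hk'
      exact Subtype.ext (hk ▸ hk')
    · intro k; trivial
  · -- surjective characterisation
    intro α β f
    constructor
    · intro hf γ δ g hg; exact lift_aux f g hf hg
    · intro h
      apply Set.eq_univ_of_forall
      intro b
      by_contra hb
      have hg : PFun.InjOnDom (fun x : PEmpty.{u+1} => (x.elim : Part β)) := by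
        intro x
        exact x.elim
      have hsq : PFunLE (PFun.comp (fun b' => (⟨b' ∉ f.ran, fun _ => b'⟩ : Part β)) f)
          (PFun.comp (fun x : PEmpty.{u+1} => (x.elim : Part β)) (fun _ => Part.none)) := by
        intro a w hw
        replace hw := Part.mem_bind_iff.mp hw
        obtain ⟨b', hb'f, hwv⟩ := hw
        rw [Part.mem_mk_iff] at hwv
        exact absurd ⟨a, hb'f⟩ hwv.choose
      obtain ⟨d, _, hd2⟩ := h _ hg (fun _ => Part.none)
        (fun b' => ⟨b' ∉ f.ran, fun _ => b'⟩) hsq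
      have := hd2 b b ⟨hb, rfl⟩
      replace this := Part.mem_bind_iff.mp this
      obtain ⟨x, _, _⟩ := this
      exact x.elim
  · -- injective characterisation
    intro γ δ g
    constructor
    · intro hg α β f hf; exact lift_aux f g hf hg
    · intro h c c' b hc hc'
      set f : ULift.{u} Bool →. PUnit.{u+1} := fun _ => Part.some PUnit.unit with hfdef
      have hf : f.ran = Set.univ := by
        apply Set.eq_univ_of_forall
        intro x
        exact ⟨⟨false⟩, by simp [hfdef, Part.mem_some_iff]⟩
      have hsq : PFunLE (PFun.comp (fun _ : PUnit.{u+1} => Part.some b) f)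
          (g.comp (fun x : ULift.{u} Bool => if x.down then Part.some c else Part.some c')) := by
        intro x w hw
        replace hw := Part.mem_bind_iff.mp hw
        refine Part.mem_bind_iff.mpr ?_
        obtain ⟨_, _, hwv⟩ := hw
        rw [Part.mem_some_iff] at hwv
        subst hwv
        cases x with
        | up bx =>
          cases bx
          · exact ⟨c', by simp, hc'⟩
          · exact ⟨c, by simp, hc⟩
      obtain ⟨d, hd1, hd2⟩ := h f hf
        (fun x => if x.down then Part.some c else Part.some c')
        (fun _ => Part.some b) hsq
      have hb' := hd2 PUnit.unit b (Part.mem_some b)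
      replace hb' := Part.mem_bind_iff.mp hb'
      obtain ⟨c₀, hc₀, _⟩ := hb'
      have h1 : c₀ = c := by
        have := hd1 ⟨true⟩ c₀ (by
          exact Part.mem_bind_iff.mpr ⟨PUnit.unit, Part.mem_some _, hc₀⟩)
        simpa using this
      have h2 : c₀ = c' := by
        have := hd1 ⟨false⟩ c₀ (by
          exact Part.mem_bind_iff.mpr ⟨PUnit.unit, Part.mem_some _, hc₀⟩)
        simpa using this
      rw [← h1, ← h2]
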